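/- Let K be a field with char K ≠ 3. If a cubic polynomial f ∈ K[z] is affinely conjugate over K to A₁z³ + B₁z + 1 and also to A₂z³ + B₂z + 1, then A₁ = A₂ and B₁ = B₂. -/

import Mathlib

open Polynomial

/-- `g` is conjugate to `f` over `K` by the affine map `φ(z) = αz + β`
(with `α ∈ K^×`), i.e. `g = φ⁻¹ ∘ f ∘ φ`, expressed as `φ ∘ g = f ∘ φ`:
`α·g(z) + β = f(αz + β)` as polynomials. -/
def AffineConj {K : Type*} [Field K] (f g : Polynomial K) : Prop :=
  ∃ α β : K, α ≠ 0 ∧ C α * g + C β = f.comp (C α * X + C β)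


lemma cubic_coeff_eq {K : Type*} [Field K] {p3 p2 p1 p0 q3 q2 q1 q0 : K}
    (h : C p3 * X^3 + C p2*X^2 + C p1*X + C p0 = C q3*X^3 + C q2*X^2 + C q1*X + C q0) :
    p3 = q3 ∧ p2 = q2 ∧ p1 = q1 ∧ p0 = q0 := by
  refine ⟨?_, ?_, ?_, ?_⟩
  · have := congrArg (fun p => p.coeff 3) h; simpa [coeff_C] using this
  · have := congrArg (fun p => p.coeff 2) h; simpa [coeff_C] using this
  · have := congrArg (fun p => p.coeff 1) h; simpa [coeff_C] using this
  · have := congrArg (fun p => p.coeff 0) h; simpa [coeff_C] using this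

theorem normal_form_unique' {K : Type*} [Field K] (h3 : (3 : K) ≠ 0)
    (f : Polynomial K) (hdeg : f.natDegree = 3) (A₁ B₁ A₂ B₂ : K)
    (hc1 : ∃ α β : K, α ≠ 0 ∧ C α * (C A₁ * X ^ 3 + C B₁ * X + 1) + C β = f.comp (C α * X + C β))
    (hc2 : ∃ α β : K, α ≠ 0 ∧ C α * (C A₂ * X ^ 3 + C B₂ * X + 1) + C β = f.comp (C α * X + C β)) :
    A₁ = A₂ ∧ B₁ = B₂ := by
  obtain ⟨α₁, β₁, hα₁, e1⟩ := hc1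
  obtain ⟨α₂, β₂, hα₂, e2⟩ := hc2
  -- A₁ ≠ 0
  have hL1 : (C α₁ * X + C β₁).natDegree = 1 := natDegree_linear hα₁
  have hcompdeg : (f.comp (C α₁ * X + C β₁)).natDegree = 3 := by
    rw [natDegree_comp, hdeg, hL1, mul_one]
  have hcne : f.comp (C α₁ * X + C β₁) ≠ 0 := by
    intro h; rw [h, natDegree_zero] at hcompdeg; exact three_ne_zero hcompdeg.symm
  have hA₁ : A₁ ≠ 0 := by
    have hc3 : (f.comp (C α₁ * X + C β₁)).coeff 3 ≠ 0 := by
      rw [← hcompdeg]; exact mt leadingCoeff_eq_zero.mp hcne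
    rw [← e1] at hc3
    have : (C α₁ * (C A₁ * X ^ 3 + C B₁ * X + 1) + C β₁).coeff 3 = α₁ * A₁ := by
      simp [coeff_one, coeff_C]
    rw [this] at hc3
    exact fun h => hc3 (by rw [h, mul_zero])
  set a : K := α₂ / α₁ with ha_def
  set b : K := (β₂ - β₁) / α₁ with hb_def
  have ha : a ≠ 0 := div_ne_zero hα₂ hα₁
  have hkey : (C α₁ * X + C β₁).comp (C a * X + C b) = C α₂ * X + C β₂ := by
    have h1 : α₁ * a = α₂ := by rw [ha_def]; field_simp
    have h2 : α₁ * b + β₁ = β₂ := by rw [hb_def]; field_simp; ring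
    simp only [add_comp, mul_comp, C_comp, X_comp]
    rw [show C α₁ * (C a * X + C b) + C β₁ = C (α₁ * a) * X + C (α₁ * b + β₁) by
      simp only [map_mul, map_add]; ring, h1, h2]
  have E := congrArg (fun p => p.comp (C a * X + C b)) e1
  simp only [comp_assoc, hkey, ← e2] at E
  simp only [add_comp, mul_comp, C_comp, X_comp, one_comp, pow_comp] at E
  have EL : C α₁ * (C A₁ * (C a * X + C b) ^ 3 + C B₁ * (C a * X + C b) + 1) + C β₁
      = C (α₁*A₁*a^3) * X^3 + C (3*(α₁*A₁*a^2*b)) * X^2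
        + C (3*α₁*A₁*a*b^2 + α₁*B₁*a) * X + C (α₁*A₁*b^3 + α₁*B₁*b + α₁ + β₁) := by
    simp only [map_mul, map_add, map_pow, map_ofNat]; ring
  have ER : C α₂ * (C A₂ * X ^ 3 + C B₂ * X + 1) + C β₂
      = C (α₂*A₂) * X^3 + C (0:K) * X^2 + C (α₂*B₂) * X + C (α₂ + β₂) := by
    simp only [map_mul, map_add, map_zero]; ring
  rw [EL, ER] at E
  obtain ⟨q3, q2, q1, q0⟩ := cubic_coeff_eq E
  have hb : b = 0 := by
    by_contra hbne
    exact mul_ne_zero h3 (mul_ne_zero (mul_ne_zero (mul_ne_zero hα₁ hA₁)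
      (pow_ne_zero 2 ha)) hbne) q2
  have hββ : β₁ = β₂ := by
    have h := hb; rw [hb_def] at h
    have := (div_eq_zero_iff.mp h).resolve_right hα₁
    linear_combination -this
  have hαα : α₁ = α₂ := by
    rw [hb, hββ] at q0; linear_combination q0
  have ha1 : a = 1 := by rw [ha_def, ← hαα, div_self hα₁]
  constructor
  · rw [ha1, ← hαα] at q3
    exact mul_left_cancel₀ hα₁ (by linear_combination q3)
  · rw [ha1, hb, ← hαα] at q1
    exact mul_left_cancel₀ hα₁ (by linear_combination q1)


/-- over a field of characteristic `≠ 3`, if a cubic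
polynomial `f` is affinely conjugate over `K` to both `A₁z³ + B₁z + 1` and
`A₂z³ + B₂z + 1`, then `A₁ = A₂` and `B₁ = B₂`. -/
theorem normal_form_unique {K : Type*} [Field K] (h3 : (3 : K) ≠ 0)
    (f : Polynomial K) (hdeg : f.natDegree = 3) (A₁ B₁ A₂ B₂ : K)
    (hc1 : AffineConj f (C A₁ * X ^ 3 + C B₁ * X + 1))
    (hc2 : AffineConj f (C A₂ * X ^ 3 + C B₂ * X + 1)) :
    A₁ = A₂ ∧ B₁ = B₂ :=
  normal_form_unique' h3 f hdeg A₁ B₁ A₂ B₂ hc1 hc2
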